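/- There exists a constant c > 0 such that for all real X, Y with 3/2 ≤ X ≤ Y and all q ∈ ℕ with q ≥ 1, one has ∫_{−∞}^{∞} |v_q(γ)|² dγ ≤ c·X·Y/q. -/

import Mathlib

open Real MeasureTheory Set

noncomputable def phi (N b r : ℝ) : ℝ := if r ≤ (N * b)⁻¹ then N ^ 2 else ((b * r)⁻¹) ^ 2

lemma phi_integrableOn {N b : ℝ} (hN : 0 < N) (hb : 0 < b) :
    IntegrableOn (phi N b) (Ioi (0:ℝ)) := by
  have hT0 : 0 < (N * b)⁻¹ := by positivity
  rw [← Ioc_union_Ioi_eq_Ioi hT0.le]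
  refine IntegrableOn.union ?_ ?_
  · have h : IntegrableOn (fun _ : ℝ => N ^ 2) (Ioc 0 (N*b)⁻¹) :=
      integrableOn_const measure_Ioc_lt_top.ne
    exact h.congr_fun (fun r hr => by rw [phi, if_pos hr.2]) measurableSet_Ioc
  · have h1 : IntegrableOn (fun r : ℝ => b⁻¹ ^ 2 * r ^ (-2 : ℝ)) (Ioi (N*b)⁻¹) :=
      (integrableOn_Ioi_rpow_of_lt (by norm_num) hT0).const_mul _
    refine h1.congr_fun (fun r hr => ?_) measurableSet_Ioi
    have hr0 : 0 < r := hT0.trans hr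
    beta_reduce
    rw [phi, if_neg (not_le.2 hr), Real.rpow_neg hr0.le,
      show (2:ℝ) = ((2:ℕ):ℝ) by norm_num, Real.rpow_natCast]
    rw [mul_inv, mul_pow]; ring

lemma phi_integrable {N b : ℝ} (hN : 0 < N) (hb : 0 < b) :
    Integrable (fun γ : ℝ => phi N b |γ|) := by
  have hIoi : IntegrableOn (fun γ : ℝ => phi N b |γ|) (Ioi 0) :=
    (phi_integrableOn hN hb).congr_fun (fun x hx => by rw [abs_of_pos hx]) measurableSet_Ioi
  have hIic : IntegrableOn (fun γ : ℝ => phi N b |γ|) (Iic 0) := by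
    rw [← Measure.map_neg_eq_self (volume : Measure ℝ)]
    have m : MeasurableEmbedding (fun x : ℝ => -x) := (Homeomorph.neg ℝ).measurableEmbedding
    rw [m.integrableOn_map_iff]
    simp_rw [Function.comp_def, abs_neg, neg_preimage, neg_Iic, neg_zero]
    exact Iff.mpr integrableOn_Ici_iff_integrableOn_Ioi hIoi
  rw [← integrableOn_univ, ← Iic_union_Ioi (a := (0:ℝ))]
  exact hIic.union hIoi

lemma phi_integral {N b : ℝ} (hN : 0 < N) (hb : 0 < b) :
    ∫ γ : ℝ, phi N b |γ| = 4 * N / b := by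
  have hT0 : 0 < (N * b)⁻¹ := by positivity
  rw [integral_comp_abs (f := phi N b)]
  rw [← Ioc_union_Ioi_eq_Ioi hT0.le,
    setIntegral_union (Ioc_disjoint_Ioi le_rfl) measurableSet_Ioi
      (((phi_integrableOn hN hb).mono_set (by rw [← Ioc_union_Ioi_eq_Ioi hT0.le]; exact subset_union_left))
      )
      ((phi_integrableOn hN hb).mono_set (by rw [← Ioc_union_Ioi_eq_Ioi hT0.le]; exact subset_union_right))]
  have h1 : ∫ r in Ioc (0:ℝ) (N*b)⁻¹, phi N b r = N ^ 2 * (N*b)⁻¹ := by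
    rw [setIntegral_congr_fun measurableSet_Ioc (g := fun _ => N ^ 2)
      (fun r hr => by rw [phi, if_pos hr.2])]
    rw [setIntegral_const, Measure.real, Real.volume_Ioc, smul_eq_mul, sub_zero, ENNReal.toReal_ofReal hT0.le, mul_comm]
  have h2 : ∫ r in Ioi ((N*b)⁻¹), phi N b r = b⁻¹ ^ 2 * ((N*b)⁻¹)⁻¹ := by
    rw [setIntegral_congr_fun measurableSet_Ioi (g := fun r => b⁻¹ ^ 2 * r ^ (-2:ℝ))
      (fun r hr => by
        have hr0 : 0 < r := hT0.trans hr
        show phi N b r = b⁻¹ ^ 2 * r ^ (-2:ℝ)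
        rw [phi, if_neg (not_le.2 hr), Real.rpow_neg hr0.le,
          show (2:ℝ) = ((2:ℕ):ℝ) by norm_num, Real.rpow_natCast]
        ring)]
    rw [MeasureTheory.integral_const_mul, integral_Ioi_rpow_of_lt (by norm_num) hT0]
    norm_num [Real.rpow_neg_one]
  rw [h1, h2]
  field_simp
  ring

lemma sum_inv_sqrt_le (n : ℕ) :
    ∑ x ∈ (Finset.Icc (-(n:ℤ)) (n:ℤ)).erase 0, (Real.sqrt |(x:ℝ)|)⁻¹ ≤ 4 * Real.sqrt n := by
  induction n with
  | zero => simp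
  | succ n ih =>
    have hset : (Finset.Icc (-((n+1:ℕ):ℤ)) ((n+1:ℕ):ℤ)).erase 0 =
        insert (-((n:ℤ)+1)) (insert ((n:ℤ)+1) ((Finset.Icc (-(n:ℤ)) (n:ℤ)).erase 0)) := by
      ext x
      simp only [Finset.mem_erase, Finset.mem_Icc, Finset.mem_insert]
      push_cast
      omega
    have h1 : ((n:ℤ)+1) ∉ (Finset.Icc (-(n:ℤ)) (n:ℤ)).erase 0 := by
      simp only [Finset.mem_erase, Finset.mem_Icc]
      omega
    have h2 : (-((n:ℤ)+1)) ∉ insert ((n:ℤ)+1) ((Finset.Icc (-(n:ℤ)) (n:ℤ)).erase 0) := by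
      simp only [Finset.mem_erase, Finset.mem_Icc, Finset.mem_insert]
      omega
    rw [hset, Finset.sum_insert h2, Finset.sum_insert h1]
    have habs1 : |((-((n:ℤ)+1) : ℤ) : ℝ)| = (n:ℝ)+1 := by push_cast; rw [abs_neg, abs_of_pos (by positivity)]
    have habs2 : |((((n:ℤ)+1) : ℤ) : ℝ)| = (n:ℝ)+1 := by push_cast; rw [abs_of_pos (by positivity)]
    rw [habs1, habs2]
    have ha : Real.sqrt ((n:ℝ)+1) > 0 := Real.sqrt_pos.2 (by positivity)
    have hc : Real.sqrt (n:ℝ) ≥ 0 := Real.sqrt_nonneg _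
    have ha2 : Real.sqrt ((n:ℝ)+1) ^ 2 = (n:ℝ)+1 := Real.sq_sqrt (by positivity)
    have hc2 : Real.sqrt (n:ℝ) ^ 2 = (n:ℝ) := Real.sq_sqrt (by positivity)
    have hkey : 2 * (Real.sqrt ((n:ℝ)+1))⁻¹ ≤ 4 * Real.sqrt ((n:ℝ)+1) - 4 * Real.sqrt (n:ℝ) := by
      rw [inv_eq_one_div, mul_div_assoc', div_le_iff₀ ha]
      nlinarith [sq_nonneg (Real.sqrt ((n:ℝ)+1) - Real.sqrt (n:ℝ))]
    have hcast : ((n+1:ℕ):ℝ) = (n:ℝ)+1 := by push_cast; ring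
    rw [hcast]
    linarith

/-- `v_q(γ) = ∑_{0 < |x| ≤ X/q} sin(π(2⌊Y⌋+1)γx)/(πγx)`, each summand read as
`2⌊Y⌋+1` when `γ = 0`. -/
noncomputable def v (X Y : ℝ) (q : ℕ) (γ : ℝ) : ℝ :=
  ∑ x ∈ (Finset.Icc (-⌊X / (q : ℝ)⌋) ⌊X / (q : ℝ)⌋).erase 0,
    if γ = 0 then 2 * (⌊Y⌋ : ℝ) + 1
    else Real.sin (Real.pi * (2 * (⌊Y⌋ : ℝ) + 1) * γ * x) / (Real.pi * γ * x)

theorem stmt13 :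
    ∃ c > 0, ∀ X Y : ℝ, ∀ q : ℕ, 3 / 2 ≤ X → X ≤ Y → 1 ≤ q →
      ∫ γ : ℝ, (v X Y q γ) ^ 2 ≤ c * X * Y / q := by
  refine ⟨64, by norm_num, fun X Y q hX hXY hq => ?_⟩
  have hY : (3:ℝ)/2 ≤ Y := hX.trans hXY
  have hq1 : (1:ℝ) ≤ (q:ℝ) := by exact_mod_cast hq
  have hq0 : (0:ℝ) < q := by linarith
  have hXq : 0 < X / q := div_pos (by linarith) hq0
  set M : ℤ := ⌊X / (q:ℝ)⌋ with hM
  set n : ℕ := M.toNat with hn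
  have hM0 : 0 ≤ M := Int.floor_nonneg.2 hXq.le
  have hnM : ((n:ℤ)) = M := Int.toNat_of_nonneg hM0
  have hnR : ((n:ℝ)) = (M:ℝ) := by exact_mod_cast congrArg (fun z : ℤ => (z:ℝ)) hnM
  have hnX : (n:ℝ) ≤ X / q := by rw [hnR, hM]; exact Int.floor_le _
  set N : ℝ := 2 * (⌊Y⌋:ℝ) + 1 with hN
  have hfl : (1:ℝ) ≤ (⌊Y⌋:ℝ) := by
    exact_mod_cast Int.le_floor.2 (by push_cast; linarith : ((1:ℤ):ℝ) ≤ Y)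
  have hN0 : 0 < N := by rw [hN]; linarith
  have hNY : N ≤ 3 * Y := by
    have := Int.floor_le Y
    rw [hN]; linarith
  set S := (Finset.Icc (-M) M).erase 0 with hS
  have hb : ∀ x ∈ S, 0 < π * |((x:ℤ):ℝ)| := by
    intro x hx
    have hx0 : x ≠ 0 := (Finset.mem_erase.1 hx).1
    have : ((x:ℤ):ℝ) ≠ 0 := Int.cast_ne_zero.2 hx0
    have := abs_pos.2 this
    positivity
  set G : ℝ → ℝ := fun γ => 4 * Real.sqrt n *
      ∑ x ∈ S, Real.sqrt |((x:ℤ):ℝ)| * phi N (π * |((x:ℤ):ℝ)|) |γ| with hG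
  have hint : ∀ x ∈ S, Integrable
      (fun γ : ℝ => Real.sqrt |((x:ℤ):ℝ)| * phi N (π * |((x:ℤ):ℝ)|) |γ|) := fun x hx =>
    (phi_integrable hN0 (hb x hx)).const_mul _
  have hGint : Integrable G := (integrable_finset_sum S hint).const_mul _
  -- the value of v away from 0
  have hv : ∀ γ : ℝ, γ ≠ 0 → v X Y q γ =
      ∑ x ∈ S, Real.sin (π * N * γ * x) / (π * γ * x) := by
    intro γ hγ
    rw [v]
    exact Finset.sum_congr rfl (fun x hx => by rw [if_neg hγ])
  -- pointwise bound
  have hpt : ∀ γ : ℝ, γ ≠ 0 → (v X Y q γ)^2 ≤ G γ := by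
    intro γ hγ
    rw [hv γ hγ]
    have hγ0 : 0 < |γ| := abs_pos.2 hγ
    set F : ℤ → ℝ := fun x => Real.sin (π * N * γ * x) / (π * γ * x) with hF
    have hCS := Finset.sum_mul_sq_le_sq_mul_sq S
      (fun x => (Real.sqrt (Real.sqrt |((x:ℤ):ℝ)|))⁻¹)
      (fun x => Real.sqrt (Real.sqrt |((x:ℤ):ℝ)|) * F x)
    have habs : ∀ x ∈ S, 0 < |((x:ℤ):ℝ)| := by
      intro x hx
      exact abs_pos.2 (Int.cast_ne_zero.2 (Finset.mem_erase.1 hx).1)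
    have e1 : ∑ x ∈ S, (Real.sqrt (Real.sqrt |((x:ℤ):ℝ)|))⁻¹ *
        (Real.sqrt (Real.sqrt |((x:ℤ):ℝ)|) * F x) = ∑ x ∈ S, F x :=
      Finset.sum_congr rfl (fun x hx =>
        inv_mul_cancel_left₀ (ne_of_gt (Real.sqrt_pos.2 (Real.sqrt_pos.2 (habs x hx)))) _)
    have e2 : ∑ x ∈ S, ((Real.sqrt (Real.sqrt |((x:ℤ):ℝ)|))⁻¹)^2
        = ∑ x ∈ S, (Real.sqrt |((x:ℤ):ℝ)|)⁻¹ :=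
      Finset.sum_congr rfl (fun x hx => by
        rw [inv_pow, Real.sq_sqrt (Real.sqrt_nonneg _)])
    have e3 : ∑ x ∈ S, (Real.sqrt (Real.sqrt |((x:ℤ):ℝ)|) * F x)^2
        = ∑ x ∈ S, Real.sqrt |((x:ℤ):ℝ)| * (F x)^2 :=
      Finset.sum_congr rfl (fun x hx => by
        rw [mul_pow, Real.sq_sqrt (Real.sqrt_nonneg _)])
    rw [e1, e2, e3] at hCS
    have hW : ∑ x ∈ S, (Real.sqrt |((x:ℤ):ℝ)|)⁻¹ ≤ 4 * Real.sqrt n := by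
      rw [hS, ← hnM]
      exact sum_inv_sqrt_le n
    have hterm : ∀ x ∈ S, (F x)^2 ≤ phi N (π * |((x:ℤ):ℝ)|) |γ| := by
      intro x hx
      have hx0 : x ≠ 0 := (Finset.mem_erase.1 hx).1
      have hxR : ((x:ℤ):ℝ) ≠ 0 := Int.cast_ne_zero.2 hx0
      have hbx : 0 < π * |((x:ℤ):ℝ)| := hb x hx
      have hden : π * γ * (x:ℝ) ≠ 0 :=
        mul_ne_zero (mul_ne_zero Real.pi_ne_zero hγ) hxR
      have habsden : |π * γ * ((x:ℤ):ℝ)| = (π * |((x:ℤ):ℝ)|) * |γ| := by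
        rw [abs_mul, abs_mul, abs_of_pos Real.pi_pos]; ring
      by_cases hcase : |γ| ≤ (N * (π * |((x:ℤ):ℝ)|))⁻¹
      · rw [phi, if_pos hcase]
        have h1 : |F x| ≤ N := by
          rw [hF]; dsimp only
          rw [abs_div, div_le_iff₀ (abs_pos.2 hden)]
          calc |Real.sin (π * N * γ * x)| ≤ |π * N * γ * ((x:ℤ):ℝ)| := Real.abs_sin_le_abs
            _ = N * |π * γ * ((x:ℤ):ℝ)| := by
                rw [show π * N * γ * ((x:ℤ):ℝ) = N * (π * γ * ((x:ℤ):ℝ)) by ring,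
                  abs_mul, abs_of_pos hN0]
        calc (F x)^2 = |F x|^2 := (sq_abs _).symm
          _ ≤ N^2 := pow_le_pow_left₀ (abs_nonneg _) h1 2
      · rw [phi, if_neg hcase]
        have h1 : |F x| ≤ ((π * |((x:ℤ):ℝ)|) * |γ|)⁻¹ := by
          rw [hF]; dsimp only
          rw [abs_div, habsden, ← one_div]
          exact (div_le_div_iff_of_pos_right (mul_pos hbx hγ0)).2 (Real.abs_sin_le_one _)
        calc (F x)^2 = |F x|^2 := (sq_abs _).symm
          _ ≤ (((π * |((x:ℤ):ℝ)|) * |γ|)⁻¹)^2 := pow_le_pow_left₀ (abs_nonneg _) h1 2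
    have hsum2 : ∑ x ∈ S, Real.sqrt |((x:ℤ):ℝ)| * (F x)^2
        ≤ ∑ x ∈ S, Real.sqrt |((x:ℤ):ℝ)| * phi N (π * |((x:ℤ):ℝ)|) |γ| :=
      Finset.sum_le_sum fun x hx =>
        mul_le_mul_of_nonneg_left (hterm x hx) (Real.sqrt_nonneg _)
    have hsum2nn : 0 ≤ ∑ x ∈ S, Real.sqrt |((x:ℤ):ℝ)| * (F x)^2 :=
      Finset.sum_nonneg fun x hx => mul_nonneg (Real.sqrt_nonneg _) (sq_nonneg _)
    calc (∑ x ∈ S, F x)^2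
        ≤ (∑ x ∈ S, (Real.sqrt |((x:ℤ):ℝ)|)⁻¹) *
          (∑ x ∈ S, Real.sqrt |((x:ℤ):ℝ)| * (F x)^2) := hCS
      _ ≤ (4 * Real.sqrt n) *
          (∑ x ∈ S, Real.sqrt |((x:ℤ):ℝ)| * phi N (π * |((x:ℤ):ℝ)|) |γ|) :=
          mul_le_mul hW hsum2 hsum2nn (by positivity)
      _ = G γ := rfl
  -- value of ∫ G
  have hGval : ∫ γ : ℝ, G γ = 4 * Real.sqrt n *
      ∑ x ∈ S, Real.sqrt |((x:ℤ):ℝ)| * (4 * N / (π * |((x:ℤ):ℝ)|)) := by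
    rw [hG]
    rw [MeasureTheory.integral_const_mul, integral_finset_sum S hint]
    congr 1
    exact Finset.sum_congr rfl fun x hx => by
      rw [MeasureTheory.integral_const_mul, phi_integral hN0 (hb x hx)]
  have hA : ∑ x ∈ S, Real.sqrt |((x:ℤ):ℝ)| * (4 * N / (π * |((x:ℤ):ℝ)|))
      = (4 * N / π) * ∑ x ∈ S, (Real.sqrt |((x:ℤ):ℝ)|)⁻¹ := by
    rw [Finset.mul_sum]
    refine Finset.sum_congr rfl fun x hx => ?_
    have habs : 0 < |((x:ℤ):ℝ)| := abs_pos.2 (Int.cast_ne_zero.2 (Finset.mem_erase.1 hx).1)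
    have hs : 0 < Real.sqrt |((x:ℤ):ℝ)| := Real.sqrt_pos.2 habs
    calc Real.sqrt |((x:ℤ):ℝ)| * (4 * N / (π * |((x:ℤ):ℝ)|))
        = (4 * N / π) * (Real.sqrt |((x:ℤ):ℝ)| * |((x:ℤ):ℝ)|⁻¹) := by
          rw [div_mul_eq_div_div, div_div]
          ring
      _ = (4 * N / π) * (Real.sqrt |((x:ℤ):ℝ)|)⁻¹ := by
          rw [← div_eq_mul_inv (Real.sqrt _), Real.sqrt_div_self]
  have hW : ∑ x ∈ S, (Real.sqrt |((x:ℤ):ℝ)|)⁻¹ ≤ 4 * Real.sqrt n := by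
    rw [hS, ← hnM]; exact sum_inv_sqrt_le n
  have hπ3 : (3:ℝ) ≤ π := by linarith [Real.pi_gt_three]
  have h0 : ∀ᵐ (γ : ℝ) ∂(volume : Measure ℝ), γ ≠ 0 := by
    rw [MeasureTheory.ae_iff]
    simp only [ne_eq, not_not, Set.setOf_eq_eq_singleton]
    exact Real.volume_singleton
  calc ∫ γ : ℝ, (v X Y q γ)^2
      ≤ ∫ γ : ℝ, G γ :=
        integral_mono_of_nonneg (Filter.Eventually.of_forall fun γ => sq_nonneg _) hGint
          (h0.mono hpt)
    _ = 4 * Real.sqrt n * ((4 * N / π) * ∑ x ∈ S, (Real.sqrt |((x:ℤ):ℝ)|)⁻¹) := by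
        rw [hGval, hA]
    _ ≤ 4 * Real.sqrt n * ((4 * N / π) * (4 * Real.sqrt n)) := by
        refine mul_le_mul_of_nonneg_left (mul_le_mul_of_nonneg_left hW ?_) ?_ <;> positivity
    _ = 64 * (N / π) * ((Real.sqrt n) * (Real.sqrt n)) := by ring
    _ = 64 * (N / π) * (n:ℝ) := by rw [Real.mul_self_sqrt (Nat.cast_nonneg n)]
    _ ≤ 64 * Y * (X / q) := by
        have h1 : N / π ≤ Y := by
          calc N / π ≤ N / 3 := by
                apply div_le_div_of_nonneg_left hN0.le (by norm_num) hπ3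
            _ ≤ Y := by linarith
        have h2 : 0 ≤ (n:ℝ) := Nat.cast_nonneg n
        have h3 : (0:ℝ) ≤ 64 * Y := by positivity
        calc 64 * (N / π) * (n:ℝ) ≤ 64 * Y * (n:ℝ) := by nlinarith
          _ ≤ 64 * Y * (X / q) := by
              apply mul_le_mul_of_nonneg_left hnX h3
    _ = 64 * X * Y / q := by ring
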